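/- arXiv:2007.08409 — 6 statements merged into one kernel-verified Lean document; each statement's English description precedes it below -/
import Mathlib

section
/- Let G be a connected graph containing no induced path on 4 vertices (P4) and no induced cycle on 4 vertices (C4). Then G has a dominant vertex, i.e., a vertex adjacent to every other vertex of G. -/
/-- A connected finite simple graph with no induced `P₄` and no induced `C₄`
has a dominant vertex. -/
theorem connected_p4_c4_free_has_dominant_vertex
    {V : Type*} [Fintype V] (G : SimpleGraph V)
    (hconn : G.Connected)
    (hP4 : ¬ Nonempty (SimpleGraph.pathGraph 4 ↪g G))
    (hC4 : ¬ Nonempty (SimpleGraph.cycleGraph 4 ↪g G)) :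
    ∃ u : V, ∀ v : V, v ≠ u → G.Adj u v := by
  classical
  have hne : Nonempty V := hconn.nonempty
  obtain ⟨u, hu⟩ := Finite.exists_max (fun v => G.degree v)
  -- Key closure property: neighbors of neighbors of `u` are `u` or neighbors of `u`.
  have key : ∀ w x, G.Adj u w → G.Adj w x → x = u ∨ G.Adj u x := by
    intro w x huw hwx
    by_contra hc
    push_neg at hc
    obtain ⟨hxu, hnux⟩ := hc
    -- every neighbor y of u other than w is adjacent to w
    have hy : ∀ y, G.Adj u y → y ≠ w → G.Adj w y := by
      intro y huy hyw
      by_contra hwy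
      have hxw : x ≠ w := fun h => G.irrefl (h ▸ hwx)
      have hxy : x ≠ y := fun h => hnux (h ▸ huy)
      have huw' := huw.symm
      have hwx' := hwx.symm
      have huy' := huy.symm
      have hnux' : ¬ G.Adj x u := fun h => hnux h.symm
      have hwy' : ¬ G.Adj y w := fun h => hwy h.symm
      have huwne := huw.ne
      have huyne := huy.ne
      by_cases hxyadj : G.Adj x y
      · -- induced C4: u - y - x - w - u
        have hxyadj' := hxyadj.symm
        refine hC4 ⟨⟨⟨![u, y, x, w], ?_⟩, ?_⟩⟩
        · intro a b hab
          fin_cases a <;> fin_cases b <;> simp_all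
        · intro a b
          fin_cases a <;> fin_cases b <;>
            simp [SimpleGraph.cycleGraph_adj, Fin.ext_iff] <;> tauto
      · -- induced P4: x - w - u - y
        have hxyadj' : ¬ G.Adj y x := fun h => hxyadj h.symm
        refine hP4 ⟨⟨⟨![x, w, u, y], ?_⟩, ?_⟩⟩
        · intro a b hab
          fin_cases a <;> fin_cases b <;> simp_all
        · intro a b
          fin_cases a <;> fin_cases b <;>
            simp [SimpleGraph.pathGraph_adj] <;> tauto
    -- degree contradiction: w has larger degree than u
    have hsub : insert u (insert x ((G.neighborFinset u).erase w)) ⊆ G.neighborFinset w := by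
      intro z hz
      simp only [Finset.mem_insert, Finset.mem_erase, SimpleGraph.mem_neighborFinset] at hz ⊢
      rcases hz with rfl | rfl | ⟨hzw, hzu⟩
      · exact huw.symm
      · exact hwx
      · exact hy z hzu hzw
    have hxnotin : x ∉ (G.neighborFinset u).erase w := by
      simp only [Finset.mem_erase, SimpleGraph.mem_neighborFinset]
      tauto
    have hunotin : u ∉ insert x ((G.neighborFinset u).erase w) := by
      simp only [Finset.mem_insert, Finset.mem_erase, SimpleGraph.mem_neighborFinset]
      push_neg
      exact ⟨fun h => hxu h.symm, fun _ => G.irrefl⟩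
    have hcard : (insert u (insert x ((G.neighborFinset u).erase w))).card
        = G.degree u + 1 := by
      rw [Finset.card_insert_of_notMem hunotin, Finset.card_insert_of_notMem hxnotin,
        Finset.card_erase_of_mem (by simpa [SimpleGraph.mem_neighborFinset] using huw)]
      have : 1 ≤ G.degree u := by
        rw [← SimpleGraph.card_neighborFinset_eq_degree]
        exact Finset.card_pos.mpr ⟨w, by simpa [SimpleGraph.mem_neighborFinset] using huw⟩
      rw [SimpleGraph.card_neighborFinset_eq_degree]
      omega
    have hle := Finset.card_le_card hsub
    rw [hcard, SimpleGraph.card_neighborFinset_eq_degree] at hle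
    have := hu w
    omega
  -- Connectivity: every vertex is `u` or a neighbor of `u`.
  have walkstep : ∀ (a b : V) (p : G.Walk a b), (a = u ∨ G.Adj u a) → (b = u ∨ G.Adj u b) := by
    intro a b p
    induction p with
    | nil => exact id
    | cons h q ih =>
      rename_i c d e
      intro ha
      apply ih
      rcases ha with rfl | ha
      · exact Or.inr h
      · exact key _ _ ha h
  refine ⟨u, fun v hvu => ?_⟩
  obtain ⟨p⟩ := hconn.preconnected u v
  rcases walkstep u v p (Or.inl rfl) with rfl | h
  · exact absurd rfl hvu
  · exact h
end

section
/- If a nonempty finite simple graph G is not a disjoint union of cliques (equivalently, G contains an induced path on 3 vertices), then the minimum eigenvalue of its adjacency matrix is at most −√2. -/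
open Matrix

/-- If a nonempty finite simple graph is not a disjoint union of cliques
(equivalently, it contains an induced path on 3 vertices), then the minimum
eigenvalue of its adjacency matrix is at most `-√2`. -/
theorem min_eigenvalue_le_neg_sqrt_two
    {V : Type*} [Fintype V] [DecidableEq V]
    (G : SimpleGraph V) [DecidableRel G.Adj]
    (hP3 : ∃ u v w : V, G.Adj u v ∧ G.Adj v w ∧ ¬ G.Adj u w ∧ u ≠ w) :
    ∃ μ : ℝ, (∃ x : V → ℝ, x ≠ 0 ∧ G.adjMatrix ℝ *ᵥ x = μ • x) ∧
      μ ≤ -Real.sqrt 2 := by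
  classical
  obtain ⟨u, v, w, huv, hvw, huw, hne⟩ := hP3
  haveI : Nonempty V := ⟨u⟩
  set A := G.adjMatrix ℝ with hAdef
  have hA : A.IsHermitian := by
    ext i j
    simp [hAdef, Matrix.conjTranspose_apply, G.adj_comm]
  set T := Matrix.toEuclideanLin A with hTdef
  have hT : T.IsSymmetric := Matrix.isHermitian_iff_isSymmetric.mp hA
  have heig := LinearMap.IsSymmetric.hasEigenvalue_iInf_of_finiteDimensional hT
  set μ : ℝ := ⨅ x : { x : EuclideanSpace ℝ V // x ≠ 0 },
      RCLike.re (inner ℝ (T x) (x : EuclideanSpace ℝ V) : ℝ) / ‖(x : EuclideanSpace ℝ V)‖ ^ 2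
    with hμ
  obtain ⟨y, hy⟩ := heig.exists_hasEigenvector
  refine ⟨μ, ⟨fun i => y i, ?_, ?_⟩, ?_⟩
  · intro h
    apply hy.2
    ext i
    exact congrFun h i
  · have h1 : T y = μ • y := Module.End.mem_eigenspace_iff.mp hy.1
    funext i
    have := congrFun (congrArg (WithLp.equiv 2 (V → ℝ)) h1) i
    simpa [hTdef, Matrix.ofLp_toEuclideanLin_apply, Matrix.toLin'_apply] using this
  · -- the Rayleigh quotient of the test vector is -√2
    set s : ℝ := Real.sqrt 2 with hs
    have hs2 : s * s = 2 := Real.mul_self_sqrt (by norm_num)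
    have huv' : u ≠ v := huv.ne
    have hvw' : v ≠ w := hvw.ne
    have hwv : G.Adj w v := hvw.symm
    have hvu : G.Adj v u := huv.symm
    have hwu : ¬ G.Adj w u := fun h => huw h.symm
    set z : V → ℝ := Pi.single u 1 + Pi.single w 1 + Pi.single v (-s) with hz
    have hzu : z u = 1 := by
      simp [hz, Pi.single_apply, huv'.symm, hne, Ne.symm hne]
    have hzv : z v = -s := by
      simp [hz, Pi.single_apply, huv', hvw', Ne.symm huv', hvw'.symm]
    have hzw : z w = 1 := by
      simp [hz, Pi.single_apply, hne, hvw', Ne.symm hne, hvw'.symm]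
    set x₀ : EuclideanSpace ℝ V := (WithLp.equiv 2 (V → ℝ)).symm z with hx₀
    have hx₀ne : x₀ ≠ 0 := by
      intro h
      have : z u = 0 := by
        have := congrFun (congrArg (WithLp.equiv 2 (V → ℝ)) h) u
        simpa [hx₀] using this
      rw [hzu] at this; norm_num at this
    -- compute A *ᵥ z ⬝ᵥ z
    have hmv : (A *ᵥ z) ⬝ᵥ z = -(4 * s) := by
      have : A *ᵥ z = (fun i => A i u * 1) + (fun i => A i w * 1) + (fun i => A i v * (-s)) := by
        simp only [hz, Matrix.mulVec_add, Matrix.mulVec_single]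
        ext i; simp [mul_comm]
      rw [this]
      simp only [add_dotProduct]
      have hdot : ∀ (f : V → ℝ), f ⬝ᵥ z = f u * 1 + f w * 1 + f v * (-s) := by
        intro f
        simp only [hz, dotProduct_add, dotProduct_single]
      rw [hdot, hdot, hdot]
      simp only [hAdef, SimpleGraph.adjMatrix_apply]
      rw [if_neg (G.irrefl), if_neg hwu, if_pos hvu, if_neg huw, if_neg (G.irrefl),
        if_pos hwv, if_pos huv, if_pos hvw, if_neg (G.irrefl)]
      ring
    have hnorm : ‖x₀‖ ^ 2 = 4 := by
      have h1 : (inner ℝ x₀ x₀ : ℝ) = z ⬝ᵥ z := by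
        simp [hx₀, PiLp.inner_apply, dotProduct, mul_comm, -inner_self_eq_norm_sq_to_K]
      have h2 : z ⬝ᵥ z = 4 := by
        have hdot : ∀ (f : V → ℝ), f ⬝ᵥ z = f u * 1 + f w * 1 + f v * (-s) := by
          intro f
          simp only [hz, dotProduct_add, dotProduct_single]
        rw [hdot]
        rw [hzu, hzv, hzw]
        nlinarith [hs2]
      rw [← real_inner_self_eq_norm_sq, h1, h2]
    have hinner : (inner ℝ (T x₀) x₀ : ℝ) = -(4 * s) := by
      have hTx : T x₀ = (WithLp.equiv 2 (V → ℝ)).symm (A *ᵥ z) := by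
        simp [hTdef, hx₀, Matrix.toEuclideanLin_apply_piLp_toLp]
      rw [hTx]
      simpa [hx₀, PiLp.inner_apply, dotProduct, mul_comm] using hmv
    -- bounded below
    have hbdd : BddBelow (Set.range fun x : { x : EuclideanSpace ℝ V // x ≠ 0 } =>
        RCLike.re (inner ℝ (T x) (x : EuclideanSpace ℝ V) : ℝ) / ‖(x : EuclideanSpace ℝ V)‖ ^ 2) := by
      refine ⟨-‖LinearMap.toContinuousLinearMap T‖, ?_⟩
      rintro r ⟨⟨x, hx⟩, rfl⟩
      have hnx : (0 : ℝ) < ‖x‖ := norm_pos_iff.mpr hx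
      have h1 : |(inner ℝ (T x) x : ℝ)| ≤ ‖T x‖ * ‖x‖ := abs_real_inner_le_norm _ _
      have h2 : ‖T x‖ ≤ ‖LinearMap.toContinuousLinearMap T‖ * ‖x‖ := by
        simpa using (LinearMap.toContinuousLinearMap T).le_opNorm x
      have h3 : -(‖LinearMap.toContinuousLinearMap T‖ * ‖x‖ * ‖x‖) ≤ (inner ℝ (T x) x : ℝ) := by
        have := neg_abs_le (inner ℝ (T x) x : ℝ)
        nlinarith [norm_nonneg (T x), norm_nonneg x]
      simp only [RCLike.re_to_real]
      rw [le_div_iff₀ (by positivity)]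
      nlinarith
    have hle : μ ≤ RCLike.re (inner ℝ (T x₀) x₀ : ℝ) / ‖x₀‖ ^ 2 :=
      ciInf_le hbdd ⟨x₀, hx₀ne⟩
    rw [hinner, hnorm] at hle
    simp only [RCLike.re_to_real] at hle
    calc μ ≤ -(4 * s) / 4 := hle
      _ = -s := by ring
end

section
/- Let M₁ ∈ ℝ^{m×m} and M₂ ∈ ℝ^{n×n} be symmetric matrices, and let M = M₁ ⊕ M₂ be their block-diagonal direct sum. Define g(N) := min over the standard simplex of xᵀNx for a symmetric matrix N. If g(M₁) > 0 and g(M₂) > 0, then 1/g(M) = 1/g(M₁) + 1/g(M₂). -/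
open Matrix

private lemma block_value {m n : ℕ} (M₁ : Matrix (Fin m) (Fin m) ℝ)
    (M₂ : Matrix (Fin n) (Fin n) ℝ) (u : Fin m → ℝ) (v : Fin n → ℝ) :
    Sum.elim u v ⬝ᵥ (Matrix.fromBlocks M₁ 0 0 M₂ *ᵥ Sum.elim u v)
      = u ⬝ᵥ (M₁ *ᵥ u) + v ⬝ᵥ (M₂ *ᵥ v) := by
  rw [fromBlocks_mulVec, sumElim_dotProduct_sumElim]
  simp

private lemma block_lower {m : ℕ} (M : Matrix (Fin m) (Fin m) ℝ) (g a : ℝ)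
    (hg : IsLeast ((fun x => x ⬝ᵥ (M *ᵥ x)) '' stdSimplex ℝ (Fin m)) g)
    (u : Fin m → ℝ) (hu : ∀ i, 0 ≤ u i) (hsum : ∑ i, u i = a) :
    a ^ 2 * g ≤ u ⬝ᵥ (M *ᵥ u) := by
  have ha : 0 ≤ a := hsum ▸ Finset.sum_nonneg fun i _ => hu i
  rcases eq_or_lt_of_le ha with h0 | hpos
  · have hz : ∀ i ∈ Finset.univ, u i = 0 :=
      (Finset.sum_eq_zero_iff_of_nonneg (fun i _ => hu i)).mp (hsum.trans h0.symm)
    have hu0 : u = 0 := funext fun i => hz i (Finset.mem_univ i)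
    simp [hu0, ← h0]
  · set w : Fin m → ℝ := a⁻¹ • u with hw
    have hwsimplex : w ∈ stdSimplex ℝ (Fin m) := by
      constructor
      · intro i; exact mul_nonneg (inv_nonneg.mpr ha) (hu i)
      · simp [hw, ← Finset.mul_sum, hsum, inv_mul_cancel₀ hpos.ne']
    have hle : g ≤ w ⬝ᵥ (M *ᵥ w) := hg.2 ⟨w, hwsimplex, rfl⟩
    have hval : w ⬝ᵥ (M *ᵥ w) = a⁻¹ ^ 2 * (u ⬝ᵥ (M *ᵥ u)) := by
      simp [hw, mulVec_smul, smul_dotProduct, dotProduct_smul, sq]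
      ring
    rw [hval] at hle
    have h2 := mul_le_mul_of_nonneg_left hle (sq_nonneg a)
    calc a ^ 2 * g ≤ a ^ 2 * (a⁻¹ ^ 2 * (u ⬝ᵥ M *ᵥ u)) := h2
    _ = u ⬝ᵥ M *ᵥ u := by field_simp

/-- For symmetric `M₁, M₂` with positive simplex-minima `g₁, g₂`, the
simplex-minimum `g` of the block direct sum `M₁ ⊕ M₂` satisfies
`1/g = 1/g₁ + 1/g₂`. -/
theorem blockDiag_quadratic_min_reciprocal {m n : ℕ}
    (M₁ : Matrix (Fin m) (Fin m) ℝ) (M₂ : Matrix (Fin n) (Fin n) ℝ)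
    (hM₁ : M₁.IsSymm) (hM₂ : M₂.IsSymm)
    (g₁ g₂ g : ℝ)
    (hg₁ : IsLeast ((fun x => x ⬝ᵥ (M₁ *ᵥ x)) '' stdSimplex ℝ (Fin m)) g₁)
    (hg₂ : IsLeast ((fun x => x ⬝ᵥ (M₂ *ᵥ x)) '' stdSimplex ℝ (Fin n)) g₂)
    (hg : IsLeast ((fun x => x ⬝ᵥ (Matrix.fromBlocks M₁ 0 0 M₂ *ᵥ x)) ''
        stdSimplex ℝ (Fin m ⊕ Fin n)) g)
    (hg₁pos : 0 < g₁) (hg₂pos : 0 < g₂) :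
    1 / g = 1 / g₁ + 1 / g₂ := by
  have hsumpos : 0 < g₁ + g₂ := by linarith
  have hgval : g = g₁ * g₂ / (g₁ + g₂) := by
    apply le_antisymm
    · -- upper bound: construct a test vector
      obtain ⟨u, hu, huval⟩ := hg₁.1
      obtain ⟨v, hv, hvval⟩ := hg₂.1
      set a : ℝ := g₂ / (g₁ + g₂) with hadef
      set b : ℝ := g₁ / (g₁ + g₂) with hbdef
      have ha : 0 ≤ a := div_nonneg hg₂pos.le hsumpos.le
      have hb : 0 ≤ b := div_nonneg hg₁pos.le hsumpos.le
      have hab : a + b = 1 := by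
        rw [hadef, hbdef, ← add_div, add_comm g₂ g₁, div_self hsumpos.ne']
      have huval' : u ⬝ᵥ (M₁ *ᵥ u) = g₁ := huval
      have hvval' : v ⬝ᵥ (M₂ *ᵥ v) = g₂ := hvval
      set x : Fin m ⊕ Fin n → ℝ := Sum.elim (a • u) (b • v) with hx
      have hxsimplex : x ∈ stdSimplex ℝ (Fin m ⊕ Fin n) := by
        constructor
        · intro i; rcases i with i | i
          · exact mul_nonneg ha (hu.1 i)
          · exact mul_nonneg hb (hv.1 i)
        · rw [hx, Fintype.sum_sum_type]
          simp only [Sum.elim_inl, Sum.elim_inr, Pi.smul_apply, smul_eq_mul,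
            ← Finset.mul_sum, hu.2, hv.2]
          simpa using hab
      have hval : x ⬝ᵥ (Matrix.fromBlocks M₁ 0 0 M₂ *ᵥ x)
          = a ^ 2 * g₁ + b ^ 2 * g₂ := by
        rw [hx, block_value]
        simp only [mulVec_smul, smul_dotProduct, dotProduct_smul, smul_eq_mul]
        rw [huval', hvval']; ring
      have := hg.2 ⟨x, hxsimplex, hval⟩
      calc g ≤ a ^ 2 * g₁ + b ^ 2 * g₂ := this
      _ = g₁ * g₂ / (g₁ + g₂) := by
        rw [hadef, hbdef]; field_simp; ring
    · -- lower bound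
      obtain ⟨y, hy, hyval⟩ := hg.1
      set u : Fin m → ℝ := y ∘ Sum.inl with hudef
      set v : Fin n → ℝ := y ∘ Sum.inr with hvdef
      have hyelim : y = Sum.elim u v := by
        funext i; rcases i with i | i <;> rfl
      set a : ℝ := ∑ i, u i with hadef
      set b : ℝ := ∑ i, v i with hbdef
      have hab : a + b = 1 := by
        have h := hy.2
        rw [Fintype.sum_sum_type] at h
        exact h
      have ha : 0 ≤ a := Finset.sum_nonneg fun i _ => hy.1 (Sum.inl i)
      have hb : 0 ≤ b := Finset.sum_nonneg fun i _ => hy.1 (Sum.inr i)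
      have h1 : a ^ 2 * g₁ ≤ u ⬝ᵥ (M₁ *ᵥ u) :=
        block_lower M₁ g₁ a hg₁ u (fun i => hy.1 (Sum.inl i)) rfl
      have h2 : b ^ 2 * g₂ ≤ v ⬝ᵥ (M₂ *ᵥ v) :=
        block_lower M₂ g₂ b hg₂ v (fun i => hy.1 (Sum.inr i)) rfl
      have hyval' : y ⬝ᵥ (Matrix.fromBlocks M₁ 0 0 M₂ *ᵥ y) = g := hyval
      have hgeq : g = u ⬝ᵥ (M₁ *ᵥ u) + v ⬝ᵥ (M₂ *ᵥ v) := by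
        rw [← hyval', hyelim, block_value]
      have key : g₁ * g₂ / (g₁ + g₂) ≤ a ^ 2 * g₁ + b ^ 2 * g₂ := by
        have hb' : b = 1 - a := by linarith
        rw [div_le_iff₀ hsumpos, hb']
        nlinarith [sq_nonneg (a * (g₁ + g₂) - g₂)]
      linarith
  have hgpos : 0 < g := hgval ▸ div_pos (mul_pos hg₁pos hg₂pos) hsumpos
  rw [hgval]
  field_simp
  ring
end

section
/- Let M ∈ ℝ^{n×n} (n ≥ 2) be symmetric with entries in [0,1], and let x ∈ Δ be a minimizer of yᵀMy over the standard simplex Δ with x(u) > 0 for all u, so that Mx = g·𝟙 where g = xᵀMx. Fix a coordinate u with x(u) < 1. Then the minimum of yᵀMy over those y ∈ Δ with y(u) = 0 is at most g + x(u)²/(1−x(u))², as witnessed by the vector y defined by y(u)=0 and y(v) = x(v)/(1−x(u)) for v ≠ u. -/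
open Matrix

/-- Deleting a low-weight coordinate: if `x` is a full-support minimizer of the
quadratic form of a symmetric matrix `M` with entries in `[0,1]` over the
standard simplex (with `Mx = g·𝟙`, `g = xᵀMx`), and `x u < 1`, then the
rescaled vector supported off `u` witnesses that the minimum over the face
`{y ∈ Δ : y u = 0}` is at most `g + x(u)²/(1-x(u))²`. -/
theorem delete_vertex_quadratic_bound {n : ℕ} (hn : 2 ≤ n)
    (M : Matrix (Fin n) (Fin n) ℝ) (hM : M.IsSymm)
    (hentries : ∀ i j : Fin n, M i j ∈ Set.Icc (0 : ℝ) 1)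
    (x : Fin n → ℝ) (hx : x ∈ stdSimplex ℝ (Fin n))
    (hpos : ∀ u : Fin n, 0 < x u)
    (hmin : ∀ z ∈ stdSimplex ℝ (Fin n), x ⬝ᵥ (M *ᵥ x) ≤ z ⬝ᵥ (M *ᵥ z))
    (g : ℝ) (hg : g = x ⬝ᵥ (M *ᵥ x))
    (hbal : M *ᵥ x = fun _ => g)
    (u : Fin n) (hu : x u < 1)
    (y : Fin n → ℝ) (hy : y = fun v => if v = u then 0 else x v / (1 - x u)) :
    y ∈ stdSimplex ℝ (Fin n) ∧ y u = 0 ∧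
      y ⬝ᵥ (M *ᵥ y) ≤ g + (x u) ^ 2 / (1 - x u) ^ 2 := by
  have hc : 0 < 1 - x u := by linarith
  set c : ℝ := 1 - x u with hcdef
  -- rewrite y as a scaled difference
  have hy' : y = c⁻¹ • (x - Pi.single u (x u)) := by
    funext v
    by_cases hv : v = u
    · subst hv
      simp [hy, Pi.single_eq_same]
    · simp [hy, hv, Pi.single_eq_of_ne hv, div_eq_inv_mul]
  -- g is nonnegative
  have hgnn : 0 ≤ g := by
    rw [hg]
    simp only [dotProduct, Matrix.mulVec]
    apply Finset.sum_nonneg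
    intro i _
    apply mul_nonneg (le_of_lt (hpos i))
    apply Finset.sum_nonneg
    intro j _
    exact mul_nonneg (hentries i j).1 (le_of_lt (hpos j))
  obtain ⟨hxnn, hxsum⟩ := hx
  constructor
  · constructor
    · intro v
      by_cases hv : v = u
      · simp [hy, hv]
      · simp only [hy, hv, if_false]
        exact div_nonneg (hxnn v) hc.le
    · rw [hy']
      simp only [Pi.smul_apply, Pi.sub_apply, smul_eq_mul]
      rw [← Finset.mul_sum, Finset.sum_sub_distrib, hxsum,
        Finset.sum_pi_single' u (x u) Finset.univ, if_pos (Finset.mem_univ u)]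
      field_simp
      exact hcdef.symm
  constructor
  · simp [hy]
  -- the quadratic form computation
  have hMxu : (M *ᵥ x) u = g := by rw [hbal]
  have hxMu : x ⬝ᵥ (M *ᵥ Pi.single u (x u)) = x u * g := by
    rw [show M *ᵥ Pi.single u (x u) = fun i => M i u * x u from funext fun i => by simp [Matrix.mulVec, dotProduct_single]]
    have : x ⬝ᵥ (fun i => M i u * x u) = (∑ i, x i * M i u) * x u := by
      simp [dotProduct, Finset.sum_mul, mul_assoc]
    rw [this]
    have hsym : ∀ i, M i u = M u i := by
      intro i
      have := congrFun (congrFun hM u) i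
      simpa [Matrix.transpose_apply] using this
    have : (∑ i, x i * M i u) = (M *ᵥ x) u := by
      simp [Matrix.mulVec, dotProduct, hsym, mul_comm]
    rw [this, hMxu, mul_comm]
  have hsMx : Pi.single u (x u) ⬝ᵥ (M *ᵥ x) = x u * g := by
    rw [single_dotProduct, hMxu]
  have hsMs : Pi.single u (x u) ⬝ᵥ (M *ᵥ Pi.single u (x u)) = M u u * (x u) ^ 2 := by
    rw [show M *ᵥ Pi.single u (x u) = fun i => M i u * x u from funext fun i => by simp [Matrix.mulVec, dotProduct_single], single_dotProduct]
    ring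
  have hquad : y ⬝ᵥ (M *ᵥ y)
      = c⁻¹ * c⁻¹ * (g - 2 * (x u * g) + M u u * (x u) ^ 2) := by
    rw [hy']
    rw [Matrix.mulVec_smul, smul_dotProduct, dotProduct_smul,
      Matrix.mulVec_sub, sub_dotProduct, dotProduct_sub,
      dotProduct_sub, hxMu, hsMx, hsMs, ← hg]
    simp only [smul_eq_mul]
    ring
  rw [hquad]
  have hMuu : M u u ≤ 1 := (hentries u u).2
  have hxu : 0 < x u := hpos u
  have key : c⁻¹ * c⁻¹ * (g - 2 * (x u * g) + M u u * x u ^ 2) * c ^ 2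
      = g - 2 * (x u * g) + M u u * x u ^ 2 := by
    have h1 : c⁻¹ * c = 1 := inv_mul_cancel₀ hc.ne'
    calc c⁻¹ * c⁻¹ * (g - 2 * (x u * g) + M u u * x u ^ 2) * c ^ 2
        = (g - 2 * (x u * g) + M u u * x u ^ 2) * ((c⁻¹ * c) * (c⁻¹ * c)) := by ring
      _ = g - 2 * (x u * g) + M u u * x u ^ 2 := by rw [h1]; ring
  rw [← mul_le_mul_iff_of_pos_right (show (0:ℝ) < c ^ 2 by positivity)]
  calc c⁻¹ * c⁻¹ * (g - 2 * (x u * g) + M u u * x u ^ 2) * c ^ 2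
      = g - 2 * (x u * g) + M u u * x u ^ 2 := key
    _ ≤ g - 2 * (x u * g) + 1 * x u ^ 2 := by nlinarith [sq_nonneg (x u)]
    _ ≤ (g + x u ^ 2 / c ^ 2) * c ^ 2 := by
        have : (g + x u ^ 2 / c ^ 2) * c ^ 2 = g * c ^ 2 + x u ^ 2 := by
          field_simp
        rw [this, hcdef]
        nlinarith [sq_nonneg (x u), mul_nonneg hgnn (sq_nonneg (x u))]
end

section
/- Fix p ∈ (1/3, 1/2). Let M ∈ ℝ^{n×n} be symmetric with diagonal entries equal to 1−p and off-diagonal entries in {0, p}, and suppose some row u of M has all off-diagonal entries in that row equal to p (a 'dominant vertex'). Let x ∈ Δ be a minimizer of yᵀMy over the standard simplex with all coordinates positive, and g = xᵀMx. Then g > p. If additionally n ≥ 2 and there exist two indices v ≠ w with M(v,w) = 0, then g < (1−p)/2, contradicting g > p; hence no such pair exists, i.e., all off-diagonal entries of M equal p. -/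
open Matrix

/-- For `p ∈ (1/3, 1/2)`: a CRG-type matrix (diagonal `1-p`, off-diagonal
entries in `{0,p}`) possessing a dominant row, whose simplex minimum `g` is
attained only at full-support vectors, satisfies `g > p`; any gray pair
`M v w = 0` would force `g < (1-p)/2`, a contradiction, so all off-diagonal
entries equal `p`. -/
theorem dominant_vertex_forces_dalmatian {n : ℕ}
    (p : ℝ) (hp : p ∈ Set.Ioo (1 / 3 : ℝ) (1 / 2))
    (M : Matrix (Fin n) (Fin n) ℝ) (hM : M.IsSymm)
    (hdiag : ∀ i : Fin n, M i i = 1 - p)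
    (hoff : ∀ i j : Fin n, i ≠ j → M i j = 0 ∨ M i j = p)
    (u : Fin n) (hdom : ∀ v : Fin n, v ≠ u → M u v = p)
    (x : Fin n → ℝ) (hx : x ∈ stdSimplex ℝ (Fin n))
    (hpos : ∀ v : Fin n, 0 < x v)
    (hmin : ∀ y ∈ stdSimplex ℝ (Fin n), x ⬝ᵥ (M *ᵥ x) ≤ y ⬝ᵥ (M *ᵥ y))
    (g : ℝ) (hg : g = x ⬝ᵥ (M *ᵥ x))
    (hcore : ∀ y ∈ stdSimplex ℝ (Fin n), y ⬝ᵥ (M *ᵥ y) = g → ∀ v : Fin n, 0 < y v) :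
    p < g ∧
    (∀ v w : Fin n, v ≠ w → M v w = 0 → g < (1 - p) / 2) ∧
    (∀ v w : Fin n, v ≠ w → M v w = p) := by
  obtain ⟨hp1, hp2⟩ := hp
  have hppos : (0:ℝ) < p := by linarith
  -- swap lemma from symmetry
  have hswap : ∀ y z : Fin n → ℝ, y ⬝ᵥ (M *ᵥ z) = z ⬝ᵥ (M *ᵥ y) := by
    intro y z
    rw [Matrix.dotProduct_mulVec, ← Matrix.mulVec_transpose, hM.eq,
      dotProduct_comm]
  -- quadratic expansion
  have expand : ∀ (a b : ℝ) (y z : Fin n → ℝ),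
      (a • y + b • z) ⬝ᵥ (M *ᵥ (a • y + b • z))
        = a^2 * (y ⬝ᵥ (M *ᵥ y)) + 2*a*b*(z ⬝ᵥ (M *ᵥ y)) + b^2 * (z ⬝ᵥ (M *ᵥ z)) := by
    intro a b y z
    simp only [Matrix.mulVec_add, Matrix.mulVec_smul, dotProduct_add,
      add_dotProduct, dotProduct_smul, smul_dotProduct,
      smul_eq_mul]
    rw [hswap y z]
    ring
  -- first-order condition: (M x)_i ≥ g for all i
  have hA : ∀ i : Fin n, g ≤ (M *ᵥ x) i := by
    intro i
    by_contra h
    push_neg at h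
    set c := (M *ᵥ x) i with hc
    set d := M i i with hd
    have key : ∀ t : ℝ, 0 < t → t ≤ 1 → 2*(g - c) ≤ t*(g - 2*c + d) := by
      intro t ht0 ht1
      have hy : ((1-t) • x + t • (Pi.single i 1 : Fin n → ℝ)) ∈ stdSimplex ℝ (Fin n) := by
        constructor
        · intro j
          have h1 : 0 ≤ (1-t) * x j := mul_nonneg (by linarith) (hpos j).le
          have h2 : 0 ≤ t * (Pi.single i 1 : Fin n → ℝ) j := by
            refine mul_nonneg ht0.le ?_
            by_cases hji : j = i
            · subst hji; simp
            · simp [Pi.single_eq_of_ne hji]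
          simpa using add_nonneg h1 h2
        · simp only [Finset.sum_add_distrib, Pi.add_apply, Pi.smul_apply, smul_eq_mul]
          rw [← Finset.mul_sum, ← Finset.mul_sum, hx.2, Finset.sum_pi_single']
          simp
      have hle := hmin _ hy
      rw [expand] at hle
      have he1 : Pi.single i (1:ℝ) ⬝ᵥ (M *ᵥ x) = c := by
        rw [single_dotProduct, one_mul]
      have he2 : Pi.single i (1:ℝ) ⬝ᵥ (M *ᵥ Pi.single i (1:ℝ)) = d := by
        rw [Matrix.mulVec_single, single_dotProduct]
        simp [hd]
      rw [he1, he2, ← hg] at hle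
      -- hle : g ≤ (1-t)^2 * g + 2*(1-t)*t*c + t^2*d
      have h3 : 0 ≤ t * (t*(g - 2*c + d) - 2*(g - c)) := by nlinarith [hle]
      nlinarith [h3, ht0]
    have hA0 : 0 < g - 2*c + d := by have := key 1 one_pos le_rfl; linarith
    set t := (g - c) / (g - 2*c + d) with htdef
    have ht0 : 0 < t := div_pos (by linarith) hA0
    have ht1 : t ≤ 1 := by
      rw [htdef, div_le_one hA0]
      have := key 1 one_pos le_rfl; linarith
    have hk := key t ht0 ht1
    have hcancel : t * (g - 2*c + d) = g - c := div_mul_cancel₀ _ (ne_of_gt hA0)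
    linarith
  -- (M x)_u ≤ g
  have hgsum : ∑ i, x i * (M *ᵥ x) i = g := by
    rw [hg]; rfl
  have hsum0 : ∑ i, x i * ((M *ᵥ x) i - g) = 0 := by
    have : ∑ i, x i * ((M *ᵥ x) i - g)
        = (∑ i, x i * (M *ᵥ x) i) - g * ∑ i, x i := by
      rw [Finset.mul_sum, ← Finset.sum_sub_distrib]
      refine Finset.sum_congr rfl fun i _ => by ring
    rw [this, hgsum, hx.2]; ring
  have hsingle : x u * ((M *ᵥ x) u - g) ≤ ∑ i, x i * ((M *ᵥ x) i - g) :=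
    Finset.single_le_sum (f := fun i => x i * ((M *ᵥ x) i - g))
      (fun i _ => mul_nonneg (hpos i).le (by have := hA i; linarith)) (Finset.mem_univ u)
  have hub : (M *ᵥ x) u ≤ g := by
    nlinarith [hpos u, hsingle, hsum0]
  -- compute (M x)_u
  have hMxu : (M *ᵥ x) u = p + (1 - 2*p) * x u := by
    have h0 : (M *ᵥ x) u = ∑ j, M u j * x j := rfl
    rw [h0]
    calc ∑ j, M u j * x j
        = ∑ j, (p * x j + (if j = u then (1-2*p) * x j else 0)) := by
          refine Finset.sum_congr rfl fun j _ => ?_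
          by_cases hju : j = u
          · subst hju; rw [hdiag]; simp; ring
          · rw [hdom j hju]; simp [hju]
      _ = p * (∑ j, x j) + (1-2*p) * x u := by
          rw [Finset.sum_add_distrib, ← Finset.mul_sum, Finset.sum_ite_eq' Finset.univ u]
          simp
      _ = p + (1-2*p) * x u := by rw [hx.2]; ring
  have hpg : p < g := by
    have := hA u
    have hxu := hpos u
    nlinarith [hub, hMxu]
  -- part 2
  have part2 : ∀ v w : Fin n, v ≠ w → M v w = 0 → g < (1 - p) / 2 := by
    intro v w hvw hvw0
    have huv : u ≠ v := by
      intro h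
      subst h
      rw [hdom w (fun hw => hvw hw.symm)] at hvw0
      linarith
    have huw : u ≠ w := by
      intro h
      have hvu : v ≠ u := fun hv => hvw (hv.trans h)
      have h1 : M v u = p := (hM.apply u v).trans (hdom v hvu)
      rw [← h] at hvw0
      rw [hvw0] at h1
      linarith
    set y : Fin n → ℝ := (1/2 : ℝ) • (Pi.single v 1 : Fin n → ℝ) + (1/2 : ℝ) • (Pi.single w 1 : Fin n → ℝ) with hydef
    have hy : y ∈ stdSimplex ℝ (Fin n) := by
      constructor
      · intro j
        have h1 : 0 ≤ (Pi.single v 1 : Fin n → ℝ) j := by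
          by_cases hj : j = v
          · subst hj; simp
          · simp [Pi.single_eq_of_ne hj]
        have h2 : 0 ≤ (Pi.single w 1 : Fin n → ℝ) j := by
          by_cases hj : j = w
          · subst hj; simp
          · simp [Pi.single_eq_of_ne hj]
        simp only [hydef, Pi.add_apply, Pi.smul_apply, smul_eq_mul]
        nlinarith
      · simp only [hydef, Finset.sum_add_distrib, Pi.add_apply, Pi.smul_apply, smul_eq_mul]
        rw [← Finset.mul_sum, ← Finset.mul_sum, Finset.sum_pi_single', Finset.sum_pi_single']
        simp
        norm_num
    have hQy : y ⬝ᵥ (M *ᵥ y) = (1 - p) / 2 := by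
      rw [hydef, expand]
      have e1 : Pi.single v (1:ℝ) ⬝ᵥ (M *ᵥ Pi.single v (1:ℝ)) = 1 - p := by
        rw [Matrix.mulVec_single, single_dotProduct]
        simp [hdiag]
      have e2 : Pi.single w (1:ℝ) ⬝ᵥ (M *ᵥ Pi.single w (1:ℝ)) = 1 - p := by
        rw [Matrix.mulVec_single, single_dotProduct]
        simp [hdiag]
      have e3 : Pi.single w (1:ℝ) ⬝ᵥ (M *ᵥ Pi.single v (1:ℝ)) = 0 := by
        rw [Matrix.mulVec_single, single_dotProduct]
        simp [hM.apply v w, hvw0]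
      rw [e1, e2, e3]
      ring
    have hle : g ≤ (1 - p) / 2 := by
      rw [hg, ← hQy]; exact hmin _ hy
    rcases lt_or_eq_of_le hle with h | h
    · exact h
    · exfalso
      have hyu := hcore y hy (by rw [hQy, ← h]) u
      have : y u = 0 := by
        simp only [hydef, Pi.add_apply, Pi.smul_apply, smul_eq_mul,
          Pi.single_eq_of_ne huv, Pi.single_eq_of_ne huw]
        ring
      rw [this] at hyu
      exact lt_irrefl 0 hyu
  refine ⟨hpg, part2, ?_⟩
  intro v w hvw
  rcases hoff v w hvw with h0 | hpeq
  · exfalso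
    have := part2 v w hvw h0
    linarith
  · exact hpeq
end

section
/- Let φ = (1+√5)/2. For p ∈ (0, 1−1/φ), the matrix M = (1−p)I + pA, where A is the adjacency matrix of the path P4, has the property that the unique minimizer x of yᵀMy over the standard simplex Δ ⊂ ℝ⁴ has all four coordinates strictly positive. -/
open Matrix

/-- SOS lower bound for the P₄ quadratic form, `s = √5`. -/
lemma p4_quad_lower (p s : ℝ) (hs : s^2 = 5) (hs2 : 2 < s) (hp0 : 0 < p)
    (v0 v1 v2 v3 : ℝ) :
    (2-3*p-p*s)/2*(v0^2+v1^2+v2^2+v3^2) ≤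
      (1-p)*(v0^2+v1^2+v2^2+v3^2) + 2*p*(v0*v1+v1*v2+v2*v3) := by
  have key : (1-p)*(v0^2+v1^2+v2^2+v3^2) + 2*p*(v0*v1+v1*v2+v2*v3)
      = (2-3*p-p*s)/2*(v0^2+v1^2+v2^2+v3^2)
        + p*(1+s)/8*(2*v0+(s-1)*v1)^2 + p*(v1+v2)^2 + p*(s-1)/8*(2*v2+(1+s)*v3)^2 := by
    linear_combination (-p*(v0*v1/2 + (s-1)*v1^2/8 + v2*v3/2 + (s+1)*v3^2/8)) * hs
  have h1 : 0 ≤ p*(1+s)/8*(2*v0+(s-1)*v1)^2 := by positivity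
  have h2 : 0 ≤ p*(v1+v2)^2 := by positivity
  have h3 : 0 ≤ p*(s-1)/8*(2*v2+(1+s)*v3)^2 := by
    have : 0 < s - 1 := by linarith
    positivity
  linarith

/-- If the P₄ quadratic form vanishes, the vector is zero. -/
lemma p4_quad_zero (p s : ℝ) (hs : s^2 = 5) (hs2 : 2 < s) (hp0 : 0 < p)
    (hgap : 0 < 2 - 3*p - p*s) (v0 v1 v2 v3 : ℝ)
    (h : (1-p)*(v0^2+v1^2+v2^2+v3^2) + 2*p*(v0*v1+v1*v2+v2*v3) = 0) :
    v0 = 0 ∧ v1 = 0 ∧ v2 = 0 ∧ v3 = 0 := by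
  have hlow := p4_quad_lower p s hs hs2 hp0 v0 v1 v2 v3
  have hS : v0^2+v1^2+v2^2+v3^2 ≤ 0 := by nlinarith [hlow, hgap]
  have h0 : v0^2 = 0 := le_antisymm (by nlinarith [sq_nonneg v1, sq_nonneg v2, sq_nonneg v3]) (sq_nonneg v0)
  have h1 : v1^2 = 0 := le_antisymm (by nlinarith [sq_nonneg v0, sq_nonneg v2, sq_nonneg v3]) (sq_nonneg v1)
  have h2 : v2^2 = 0 := le_antisymm (by nlinarith [sq_nonneg v0, sq_nonneg v1, sq_nonneg v3]) (sq_nonneg v2)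
  have h3 : v3^2 = 0 := le_antisymm (by nlinarith [sq_nonneg v0, sq_nonneg v1, sq_nonneg v2]) (sq_nonneg v3)
  exact ⟨pow_eq_zero_iff two_ne_zero |>.mp h0, pow_eq_zero_iff two_ne_zero |>.mp h1,
    pow_eq_zero_iff two_ne_zero |>.mp h2, pow_eq_zero_iff two_ne_zero |>.mp h3⟩

set_option maxHeartbeats 1000000 in
/-- For `p ∈ (0, 1 - 1/φ)` with `φ` the golden ratio, the quadratic form of
`M = (1-p)I + pA` (with `A` the adjacency matrix of `P₄`) has a unique
minimizer over the standard simplex in `ℝ⁴`, and that minimizer has all four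
coordinates strictly positive. -/
theorem p4_is_p_core
    (phi : ℝ) (hphi : phi = (1 + Real.sqrt 5) / 2)
    (p : ℝ) (hp : p ∈ Set.Ioo (0 : ℝ) (1 - 1 / phi))
    (A : Matrix (Fin 4) (Fin 4) ℝ)
    (hA : ∀ i j : Fin 4, A i j = if (i : ℤ) - j = 1 ∨ (j : ℤ) - i = 1 then 1 else 0)
    (M : Matrix (Fin 4) (Fin 4) ℝ)
    (hMdef : M = (1 - p) • (1 : Matrix (Fin 4) (Fin 4) ℝ) + p • A) :
    ∃ x : Fin 4 → ℝ,
      (x ∈ stdSimplex ℝ (Fin 4) ∧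
        ∀ y ∈ stdSimplex ℝ (Fin 4), x ⬝ᵥ (M *ᵥ x) ≤ y ⬝ᵥ (M *ᵥ y)) ∧
      (∀ i : Fin 4, 0 < x i) ∧
      (∀ z : Fin 4 → ℝ,
        (z ∈ stdSimplex ℝ (Fin 4) ∧
          ∀ y ∈ stdSimplex ℝ (Fin 4), z ⬝ᵥ (M *ᵥ z) ≤ y ⬝ᵥ (M *ᵥ y)) → z = x) := by
  obtain ⟨hp0, hp1⟩ := hp
  set s : ℝ := Real.sqrt 5 with hs_def
  have hs : s^2 = 5 := Real.sq_sqrt (by norm_num)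
  have hs0 : 0 ≤ s := Real.sqrt_nonneg 5
  have hs2 : 2 < s := by nlinarith
  have hs3 : s < 3 := by nlinarith
  -- translate the bound on p
  have h1s : (0:ℝ) < 1 + s := by linarith
  have hphi_eq : 1 - 1/phi = (3-s)/2 := by
    rw [hphi]
    rw [one_div, inv_div]
    field_simp
    linear_combination hs
  have hps : 2*p < 3 - s := by
    rw [hphi_eq] at hp1; linarith
  have hp12 : p < 1/2 := by linarith
  have hD : (0:ℝ) < 2*(2-3*p) := by linarith
  have hgap : 0 < 2 - 3*p - p*s := by
    have h1 : 0 < 3 - 2*p - s := by linarith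
    have h2 : 0 < 3 - 2*p + s := by linarith
    nlinarith [mul_pos hp0 h1, mul_pos h1 h2]
  -- the candidate minimizer
  obtain ⟨a, ha_def⟩ : ∃ x : ℝ, x = (1-p)/(2*(2-3*p)) := ⟨_, rfl⟩
  obtain ⟨b, hb_def⟩ : ∃ x : ℝ, x = (1-2*p)/(2*(2-3*p)) := ⟨_, rfl⟩
  have ha : 0 < a := ha_def ▸ div_pos (by linarith) hD
  have hb : 0 < b := hb_def ▸ div_pos (by linarith) hD
  -- quadratic form expansion
  have hA' : A = !![0,1,0,0;1,0,1,0;0,1,0,1;0,0,1,0] := by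
    ext i j
    fin_cases i <;> fin_cases j <;> norm_num [hA]
  have hQ : ∀ w : Fin 4 → ℝ, w ⬝ᵥ (M *ᵥ w) = (1-p)*((w 0)^2+(w 1)^2+(w 2)^2+(w 3)^2)
      + 2*p*(w 0*w 1+w 1*w 2+w 2*w 3) := by
    intro w
    subst hMdef
    rw [hA']
    simp [mulVec, dotProduct, Fin.sum_univ_four, Matrix.one_apply, Matrix.add_apply,
      Matrix.smul_apply, Matrix.vecHead, Matrix.vecTail]
    ring
  have hxq : (![a,b,b,a]) ⬝ᵥ (M *ᵥ ![a,b,b,a]) = (1-p-p^2)/(2*(2-3*p)) := by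
    rw [hQ]
    show (1-p)*(a^2+b^2+b^2+a^2) + 2*p*(a*b+b*b+b*a) = (1-p-p^2)/(2*(2-3*p))
    rw [ha_def, hb_def]
    field_simp [ne_of_gt (show (0:ℝ) < 2-p*3 by linarith)]
    ring
  -- minimality over the simplex
  have hmin : ∀ y ∈ stdSimplex ℝ (Fin 4),
      (1-p-p^2)/(2*(2-3*p)) ≤ y ⬝ᵥ (M *ᵥ y) := by
    intro y hy
    have hsum : y 0 + y 1 + y 2 + y 3 = 1 := by
      have := hy.2; rwa [Fin.sum_univ_four] at this
    rw [hQ]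
    have hid : (1-p)*((2*(2-3*p)*y 0 - (1-p))^2 + (2*(2-3*p)*y 1 - (1-2*p))^2
          + (2*(2-3*p)*y 2 - (1-2*p))^2 + (2*(2-3*p)*y 3 - (1-p))^2)
        + 2*p*((2*(2-3*p)*y 0 - (1-p))*(2*(2-3*p)*y 1 - (1-2*p))
          + (2*(2-3*p)*y 1 - (1-2*p))*(2*(2-3*p)*y 2 - (1-2*p))
          + (2*(2-3*p)*y 2 - (1-2*p))*(2*(2-3*p)*y 3 - (1-p)))
        = (2*(2-3*p))^2*((1-p)*((y 0)^2+(y 1)^2+(y 2)^2+(y 3)^2)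
            + 2*p*(y 0*y 1+y 1*y 2+y 2*y 3)) - (2*(2-3*p))*(1-p-p^2) := by
      linear_combination (-4*(2-3*p)*(1-p-p^2)) * hsum
    have hlow := p4_quad_lower p s hs hs2 hp0
      (2*(2-3*p)*y 0 - (1-p)) (2*(2-3*p)*y 1 - (1-2*p))
      (2*(2-3*p)*y 2 - (1-2*p)) (2*(2-3*p)*y 3 - (1-p))
    have hnn : 0 ≤ (2-3*p-p*s)/2*((2*(2-3*p)*y 0 - (1-p))^2 + (2*(2-3*p)*y 1 - (1-2*p))^2
          + (2*(2-3*p)*y 2 - (1-2*p))^2 + (2*(2-3*p)*y 3 - (1-p))^2) := by positivity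
    set q1 : ℝ := (1-p)*((y 0)^2+(y 1)^2+(y 2)^2+(y 3)^2)
      + 2*p*(y 0*y 1+y 1*y 2+y 2*y 3) with hq1
    have h0 : 0 ≤ (2*(2-3*p))^2*q1 - (2*(2-3*p))*(1-p-p^2) := by
      rw [← hid]; linarith [hlow, hnn]
    have e : (2*(2-3*p))^2*q1 = (2*(2-3*p))*(q1*(2*(2-3*p))) := by ring
    have h' : (2*(2-3*p))*(1-p-p^2) ≤ (2*(2-3*p))*(q1*(2*(2-3*p))) := by linarith
    rw [div_le_iff₀ hD]
    exact le_of_mul_le_mul_left h' hD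
  have hxmem : (![a,b,b,a]) ∈ stdSimplex ℝ (Fin 4) := by
    constructor
    · intro i
      fin_cases i
      · exact ha.le
      · exact hb.le
      · exact hb.le
      · exact ha.le
    · rw [Fin.sum_univ_four]
      show a + b + b + a = 1
      rw [ha_def, hb_def]
      field_simp [ne_of_gt (show (0:ℝ) < 2-p*3 by linarith)]
      ring
  refine ⟨![a,b,b,a], ⟨hxmem, ?_⟩, ?_, ?_⟩
  · intro y hy
    rw [hxq]
    exact hmin y hy
  · intro i
    fin_cases i
    · exact ha
    · exact hb
    · exact hb
    · exact ha
  · rintro z ⟨hzmem, hzmin⟩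
    have h1 : z ⬝ᵥ (M *ᵥ z) ≤ (1-p-p^2)/(2*(2-3*p)) := by
      rw [← hxq]; exact hzmin _ hxmem
    have h2 := hmin z hzmem
    have heq : z ⬝ᵥ (M *ᵥ z) = (1-p-p^2)/(2*(2-3*p)) := le_antisymm h1 h2
    have hsum : z 0 + z 1 + z 2 + z 3 = 1 := by
      have := hzmem.2; rwa [Fin.sum_univ_four] at this
    rw [hQ] at heq
    have hid : (1-p)*((2*(2-3*p)*z 0 - (1-p))^2 + (2*(2-3*p)*z 1 - (1-2*p))^2
          + (2*(2-3*p)*z 2 - (1-2*p))^2 + (2*(2-3*p)*z 3 - (1-p))^2)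
        + 2*p*((2*(2-3*p)*z 0 - (1-p))*(2*(2-3*p)*z 1 - (1-2*p))
          + (2*(2-3*p)*z 1 - (1-2*p))*(2*(2-3*p)*z 2 - (1-2*p))
          + (2*(2-3*p)*z 2 - (1-2*p))*(2*(2-3*p)*z 3 - (1-p)))
        = (2*(2-3*p))^2*((1-p)*((z 0)^2+(z 1)^2+(z 2)^2+(z 3)^2)
            + 2*p*(z 0*z 1+z 1*z 2+z 2*z 3)) - (2*(2-3*p))*(1-p-p^2) := by
      linear_combination (-4*(2-3*p)*(1-p-p^2)) * hsum
    have hzero : (2*(2-3*p))^2*((1-p)*((z 0)^2+(z 1)^2+(z 2)^2+(z 3)^2)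
            + 2*p*(z 0*z 1+z 1*z 2+z 2*z 3)) - (2*(2-3*p))*(1-p-p^2) = 0 := by
      rw [heq]
      field_simp
      ring
    have hlow := p4_quad_lower p s hs hs2 hp0
      (2*(2-3*p)*z 0 - (1-p)) (2*(2-3*p)*z 1 - (1-2*p))
      (2*(2-3*p)*z 2 - (1-2*p)) (2*(2-3*p)*z 3 - (1-p))
    have hq0 : (1-p)*((2*(2-3*p)*z 0 - (1-p))^2 + (2*(2-3*p)*z 1 - (1-2*p))^2
          + (2*(2-3*p)*z 2 - (1-2*p))^2 + (2*(2-3*p)*z 3 - (1-p))^2)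
        + 2*p*((2*(2-3*p)*z 0 - (1-p))*(2*(2-3*p)*z 1 - (1-2*p))
          + (2*(2-3*p)*z 1 - (1-2*p))*(2*(2-3*p)*z 2 - (1-2*p))
          + (2*(2-3*p)*z 2 - (1-2*p))*(2*(2-3*p)*z 3 - (1-p))) = 0 := hid.trans hzero
    obtain ⟨w0, w1, w2, w3⟩ := p4_quad_zero p s hs hs2 hp0 hgap _ _ _ _ hq0
    clear hid hzero hq0 heq h1 h2 hQ hA' hA hmin hzmin hxq hxmem hzmem hsum hMdef
    funext i
    fin_cases i
    · show z 0 = a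
      rw [ha_def, eq_div_iff hD.ne']
      linarith [w0]
    · show z 1 = b
      rw [hb_def, eq_div_iff hD.ne']
      linarith [w1]
    · show z 2 = b
      rw [hb_def, eq_div_iff hD.ne']
      linarith [w2]
    · show z 3 = a
      rw [ha_def, eq_div_iff hD.ne']
      linarith [w3]
end
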